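/- arXiv:1506.02792 — 3 statements merged into one kernel-verified Lean document; each statement's English description precedes it below -/
import Mathlib

section
/- For the concave maximization problem: maximize Σ_{i=1}^N p(1-p)^{i-1}·(1/2)log(1+E_i) subject to E_i ≥ 0 and Σ_{i=1}^N E_i ≤ B̄, if Ñ < N is the smallest positive integer satisfying 1 > (1-p)^{Ñ}[1 + p(B̄+Ñ)], then the allocation E_i = (Ñ+B̄)·p(1-p)^{i-1}/(1-(1-p)^{Ñ}) − 1 for i ≤ Ñ and E_i = 0 for i > Ñ is feasible (each E_i ≥ 0 and Σ E_i = B̄). -/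
/-- Feasibility of the optimal online power allocation: with `Ñ < N` the smallest positive
integer satisfying `(1-p)^Ñ [1+p(B̄+Ñ)] < 1`, the allocation
`E_i = (Ñ+B̄)p(1-p)^(i-1)/(1-(1-p)^Ñ) - 1` for `i ≤ Ñ`, `E_i = 0` for `i > Ñ`,
satisfies `E_i ≥ 0` and `Σ_{i=1}^N E_i = B̄`. -/
theorem optimal_allocation_feasible (p B : ℝ) (hp0 : 0 < p) (hp1 : p < 1) (hB : 0 < B)
    (Nt N : ℕ) (hNt : 0 < Nt) (hNtN : Nt < N)
    (hlt : (1 - p) ^ Nt * (1 + p * (B + Nt)) < 1)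
    (hmin : ∀ m : ℕ, 0 < m → m < Nt → 1 ≤ (1 - p) ^ m * (1 + p * (B + m))) :
    (∀ i ∈ Finset.Icc 1 N,
      0 ≤ (if i ≤ Nt then ((Nt : ℝ) + B) * (p * (1 - p) ^ (i - 1)) / (1 - (1 - p) ^ Nt) - 1
           else 0)) ∧
    ∑ i ∈ Finset.Icc 1 N,
      (if i ≤ Nt then ((Nt : ℝ) + B) * (p * (1 - p) ^ (i - 1)) / (1 - (1 - p) ^ Nt) - 1
       else 0) = B := by
  set q : ℝ := 1 - p with hq
  have hq0 : 0 < q := by simp [hq]; linarith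
  have hq1 : q < 1 := by simp [hq]; linarith
  have hqNt : q ^ Nt < 1 := pow_lt_one₀ hq0.le hq1 hNt.ne'
  have hden : 0 < 1 - q ^ Nt := by linarith
  -- key inequality: 1 - q^Nt ≤ (Nt+B)*p*q^(Nt-1)
  have hkey : 1 - q ^ Nt ≤ ((Nt : ℝ) + B) * (p * q ^ (Nt - 1)) := by
    rcases eq_or_lt_of_le (show 1 ≤ Nt from hNt) with h1 | h1
    · -- Nt = 1
      have : Nt = 1 := h1.symm
      subst this
      simp only [Nat.cast_one, pow_one, Nat.sub_self, pow_zero, mul_one]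
      nlinarith
    · -- Nt ≥ 2, use hmin at m = Nt - 1
      have hm := hmin (Nt - 1) (by omega) (by omega)
      have hcast : ((Nt - 1 : ℕ) : ℝ) = (Nt : ℝ) - 1 := by
        have : (1 : ℕ) ≤ Nt := hNt
        push_cast [this]
        ring
      rw [hcast] at hm
      have hpow : q ^ Nt = q ^ (Nt - 1) * q := by
        rw [← pow_succ]
        congr 1
        omega
      rw [hpow]
      have hqnn : (0:ℝ) ≤ q ^ (Nt - 1) := by positivity
      nlinarith [hm]
  constructor
  · intro i hi
    by_cases hiNt : i ≤ Nt
    · simp only [hiNt, if_true]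
      have hi1 : 1 ≤ i := (Finset.mem_Icc.mp hi).1
      have hpowle : q ^ (Nt - 1) ≤ q ^ (i - 1) :=
        pow_le_pow_of_le_one hq0.le hq1.le (by omega)
      have : 1 - q ^ Nt ≤ ((Nt : ℝ) + B) * (p * q ^ (i - 1)) := by
        refine hkey.trans ?_
        have hc : (0:ℝ) ≤ ((Nt : ℝ) + B) * p := by positivity
        calc ((Nt : ℝ) + B) * (p * q ^ (Nt - 1)) = ((Nt : ℝ) + B) * p * q ^ (Nt - 1) := by ring
          _ ≤ ((Nt : ℝ) + B) * p * q ^ (i - 1) := by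
              exact mul_le_mul_of_nonneg_left hpowle hc
          _ = ((Nt : ℝ) + B) * (p * q ^ (i - 1)) := by ring
      have : 1 ≤ ((Nt : ℝ) + B) * (p * q ^ (i - 1)) / (1 - q ^ Nt) :=
        (one_le_div hden).mpr this
      linarith
    · simp [hiNt]
  · rw [← Finset.sum_filter]
    have hfil : (Finset.Icc 1 N).filter (· ≤ Nt) = Finset.Icc 1 Nt := by
      ext x
      simp only [Finset.mem_filter, Finset.mem_Icc]
      omega
    rw [hfil]
    have hterm : ∀ i ∈ Finset.Icc 1 Nt,
        ((Nt : ℝ) + B) * (p * q ^ (i - 1)) / (1 - q ^ Nt) - 1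
        = ((Nt : ℝ) + B) * p / (1 - q ^ Nt) * q ^ (i - 1) - 1 := by
      intro i _; ring
    rw [Finset.sum_congr rfl hterm, Finset.sum_sub_distrib, Finset.sum_const,
      Nat.card_Icc, ← Finset.mul_sum]
    have hsum : ∑ i ∈ Finset.Icc 1 Nt, q ^ (i - 1) = ∑ j ∈ Finset.range Nt, q ^ j := by
      rw [← Finset.Ico_add_one_right_eq_Icc, Finset.sum_Ico_eq_sum_range]
      simp
    rw [hsum, geom_sum_eq (by intro h; linarith) Nt]
    have hqne : (1 : ℝ) - q ^ Nt ≠ 0 := hden.ne'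
    have hpne : p ≠ 0 := hp0.ne'
    have hq1p : q - 1 = -p := by simp [hq]
    rw [hq1p]
    simp only [Nat.add_sub_cancel, nsmul_eq_mul, mul_one]
    field_simp
    ring
end

section
/- With the optimal allocation E_i = (Ñ+B̄)p(1-p)^{i-1}/(1-(1-p)^{Ñ}) − 1 for 1 ≤ i ≤ Ñ and E_i = 0 otherwise, the value Σ_{i=1}^{Ñ} p(1-p)^{i-1}(1/2)log(1+E_i) equals ((1-(1-p)^{Ñ})/2)·log(p(B̄+Ñ)/(1-(1-p)^{Ñ})) + ((1-p-(1-p)^{Ñ}(1-p+Ñp))/(2p))·log(1-p). -/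
lemma sum_geom_aux (q : ℝ) (N : ℕ) :
    ∑ i ∈ Finset.Icc 1 N, (1 - q) * q ^ (i - 1) = 1 - q ^ N := by
  induction N with
  | zero => simp
  | succ n ih =>
    rw [Finset.sum_Icc_succ_top (by omega), ih]
    simp only [Nat.add_sub_cancel]
    ring

lemma sum_geom_aux2 (q : ℝ) (N : ℕ) :
    ∑ i ∈ Finset.Icc 1 N, ((i : ℝ) - 1) * q ^ (i - 1) * (1 - q) ^ 2 =
      q - (N : ℝ) * q ^ N + ((N : ℝ) - 1) * q ^ (N + 1) := by
  induction N with
  | zero => simp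
  | succ n ih =>
    rw [Finset.sum_Icc_succ_top (by omega), ih]
    simp only [Nat.add_sub_cancel]
    push_cast
    ring

/-- Value of the optimal online power allocation:
`Σ_{i=1}^Ñ p(1-p)^(i-1)(1/2)log(1+E_i)` equals the closed-form expression
`((1-(1-p)^Ñ)/2) log(p(B̄+Ñ)/(1-(1-p)^Ñ)) + ((1-p-(1-p)^Ñ(1-p+Ñp))/(2p)) log(1-p)`. -/
theorem optimal_allocation_value (p B : ℝ) (hp0 : 0 < p) (hp1 : p < 1) (hB : 0 < B)
    (Nt : ℕ) (hNt : 0 < Nt)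
    (hlt : (1 - p) ^ Nt * (1 + p * (B + Nt)) < 1)
    (hmin : ∀ m : ℕ, 0 < m → m < Nt → 1 ≤ (1 - p) ^ m * (1 + p * (B + m))) :
    ∑ i ∈ Finset.Icc 1 Nt, p * (1 - p) ^ (i - 1) *
        (1 / 2 * Real.log (1 +
          (((Nt : ℝ) + B) * (p * (1 - p) ^ (i - 1)) / (1 - (1 - p) ^ Nt) - 1))) =
      (1 - (1 - p) ^ Nt) / 2 * Real.log (p * (B + Nt) / (1 - (1 - p) ^ Nt)) +
      (1 - p - (1 - p) ^ Nt * (1 - p + Nt * p)) / (2 * p) * Real.log (1 - p) := by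
  have hq0 : (0:ℝ) < 1 - p := by linarith
  have hq1 : (1 - p) ^ Nt < 1 := pow_lt_one₀ (le_of_lt hq0) (by linarith) hNt.ne'
  have hden : (0:ℝ) < 1 - (1 - p) ^ Nt := by linarith
  have hC0 : p * (B + Nt) / (1 - (1 - p) ^ Nt) ≠ 0 := by
    have : (0:ℝ) < p * (B + Nt) := by positivity
    positivity
  have key : ∀ i ∈ Finset.Icc 1 Nt,
      p * (1 - p) ^ (i - 1) * (1 / 2 * Real.log (1 +
          (((Nt : ℝ) + B) * (p * (1 - p) ^ (i - 1)) / (1 - (1 - p) ^ Nt) - 1))) =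
      (Real.log (p * (B + Nt) / (1 - (1 - p) ^ Nt)) / 2) * ((1 - (1 - p)) * (1 - p) ^ (i - 1)) +
      (Real.log (1 - p) / (2 * p)) * (((i : ℝ) - 1) * (1 - p) ^ (i - 1) * (1 - (1 - p)) ^ 2) := by
    intro i hi
    have hi1 : 1 ≤ i := (Finset.mem_Icc.mp hi).1
    have h1 : 1 + (((Nt : ℝ) + B) * (p * (1 - p) ^ (i - 1)) / (1 - (1 - p) ^ Nt) - 1) =
        (p * (B + Nt) / (1 - (1 - p) ^ Nt)) * (1 - p) ^ (i - 1) := by ring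
    rw [h1, Real.log_mul hC0 (pow_ne_zero _ hq0.ne'), Real.log_pow]
    have hc : ((i - 1 : ℕ) : ℝ) = (i : ℝ) - 1 := by
      push_cast [Nat.cast_sub hi1]; ring
    rw [hc]
    field_simp
    ring
  have T1 : ∑ i ∈ Finset.Icc 1 Nt,
      (Real.log (p * (B + Nt) / (1 - (1 - p) ^ Nt)) / 2) * ((1 - (1 - p)) * (1 - p) ^ (i - 1)) =
      (Real.log (p * (B + Nt) / (1 - (1 - p) ^ Nt)) / 2) * (1 - (1 - p) ^ Nt) := by
    rw [← Finset.mul_sum, sum_geom_aux (1 - p) Nt]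
  have T2 : ∑ i ∈ Finset.Icc 1 Nt,
      (Real.log (1 - p) / (2 * p)) * (((i : ℝ) - 1) * (1 - p) ^ (i - 1) * (1 - (1 - p)) ^ 2) =
      (Real.log (1 - p) / (2 * p)) *
        ((1 - p) - (Nt : ℝ) * (1 - p) ^ Nt + ((Nt : ℝ) - 1) * (1 - p) ^ (Nt + 1)) := by
    rw [← Finset.mul_sum, sum_geom_aux2 (1 - p) Nt]
  rw [Finset.sum_congr rfl key, Finset.sum_add_distrib, T1, T2]
  field_simp
  ring
end

section
/- For 0 < p < 1 and B̄ > 0, Σ_{k=1}^{∞} p²(1-p)^{k-1}·(k/2)·log(1 + B̄/k) converges and is at most (1/2)log(1+pB̄). -/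
/-- The noncausal upper bound series `Σ_{k≥1} p²(1-p)^(k-1) (k/2) log(1+B̄/k)` converges
and is at most `(1/2) log(1+pB̄)` (1-based `k` encoded as `k+1`). -/
theorem noncausal_upper_bound (p B : ℝ) (hp0 : 0 < p) (hp1 : p < 1) (hB : 0 < B) :
    Summable (fun k : ℕ =>
      p ^ 2 * (1 - p) ^ k * (((k : ℝ) + 1) / 2 * Real.log (1 + B / ((k : ℝ) + 1)))) ∧
    (∑' k : ℕ,
      p ^ 2 * (1 - p) ^ k * (((k : ℝ) + 1) / 2 * Real.log (1 + B / ((k : ℝ) + 1)))) ≤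
      1 / 2 * Real.log (1 + p * B) := by
  set x := 1 - p with hxdef
  have hx0 : 0 ≤ x := by simp [hxdef]; linarith
  have hx1 : x < 1 := by simp [hxdef]; linarith
  have hxabs : ‖x‖ < 1 := by rw [Real.norm_eq_abs, abs_lt]; constructor <;> simp [hxdef] <;> linarith
  have hpx : 1 - x = p := by simp [hxdef]
  have hpB : (0:ℝ) < 1 + p * B := by positivity
  set L := Real.log (1 + p * B) with hLdef
  set C := B / (1 + p * B) with hCdef
  -- geometric sums
  have hg : HasSum (fun k : ℕ => x ^ k) (1 / (1 - x)) := by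
    simpa [one_div] using hasSum_geometric_of_lt_one hx0 hx1
  have hg1 : HasSum (fun k : ℕ => ((k:ℝ) + 1) * x ^ k) (1 / (1 - x) ^ 2) := by
    have h2 : HasSum (fun k : ℕ => (k:ℝ) * x ^ k) (x / (1 - x) ^ 2) :=
      hasSum_coe_mul_geometric_of_norm_lt_one hxabs
    have h3 := h2.add hg
    have hval : x / (1 - x) ^ 2 + 1 / (1 - x) = 1 / (1 - x) ^ 2 := by
      rw [hpx]; field_simp; ring
    rw [hval] at h3
    convert h3 using 1
    funext k; ring
  have hS1 : HasSum (fun k : ℕ => p ^ 2 * x ^ k * ((k:ℝ) + 1)) 1 := by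
    have h := hg1.mul_left (p ^ 2)
    have hval : p ^ 2 * (1 / (1 - x) ^ 2) = 1 := by rw [hpx]; field_simp
    rw [hval] at h
    convert h using 1
    case e'_3 => rfl
    funext k; ring
  have hS0 : HasSum (fun k : ℕ => p ^ 2 * x ^ k) p := by
    have := hg.mul_left (p ^ 2)
    convert this using 1
    case e'_3 => rfl
    rw [hpx]; field_simp
  -- pointwise bound
  have key : ∀ k : ℕ, Real.log (1 + B / ((k:ℝ) + 1)) ≤ L + C * (1 / ((k:ℝ) + 1) - p) := by
    intro k
    have hk1 : (0:ℝ) < (k:ℝ) + 1 := by positivity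
    have ht : (0:ℝ) < 1 + B / ((k:ℝ) + 1) := by positivity
    have hlog : Real.log ((1 + B / ((k:ℝ) + 1)) / (1 + p * B)) ≤
        (1 + B / ((k:ℝ) + 1)) / (1 + p * B) - 1 :=
      Real.log_le_sub_one_of_pos (by positivity)
    rw [Real.log_div (ne_of_gt ht) (ne_of_gt hpB)] at hlog
    have : (1 + B / ((k:ℝ) + 1)) / (1 + p * B) - 1 = C * (1 / ((k:ℝ) + 1) - p) := by
      rw [hCdef]; field_simp; ring
    rw [this] at hlog
    rw [hLdef]; linarith
  -- nonnegativity of terms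
  have hnn : ∀ k : ℕ, 0 ≤ p ^ 2 * (1 - p) ^ k *
      (((k:ℝ) + 1) / 2 * Real.log (1 + B / ((k:ℝ) + 1))) := by
    intro k
    have hk1 : (0:ℝ) < (k:ℝ) + 1 := by positivity
    have : 0 ≤ Real.log (1 + B / ((k:ℝ) + 1)) :=
      Real.log_nonneg (by nlinarith [le_of_lt (div_pos hB hk1)])
    have hx0' : (0:ℝ) ≤ (1 - p) ^ k := pow_nonneg (by linarith) k
    positivity
  -- majorant series
  have hb : HasSum (fun k : ℕ =>
      p ^ 2 * x ^ k * ((k:ℝ) + 1) * (L / 2) + p ^ 2 * x ^ k * (C / 2)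
        - p ^ 2 * x ^ k * ((k:ℝ) + 1) * (C * p / 2))
      (1 * (L / 2) + p * (C / 2) - 1 * (C * p / 2)) :=
    ((hS1.mul_right (L / 2)).add (hS0.mul_right (C / 2))).sub (hS1.mul_right (C * p / 2))
  have hbval : 1 * (L / 2) + p * (C / 2) - 1 * (C * p / 2) = 1 / 2 * L := by ring
  rw [hbval] at hb
  have hble : ∀ k : ℕ, p ^ 2 * (1 - p) ^ k *
      (((k:ℝ) + 1) / 2 * Real.log (1 + B / ((k:ℝ) + 1))) ≤
      p ^ 2 * x ^ k * ((k:ℝ) + 1) * (L / 2) + p ^ 2 * x ^ k * (C / 2)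
        - p ^ 2 * x ^ k * ((k:ℝ) + 1) * (C * p / 2) := by
    intro k
    have hk1 : (0:ℝ) < (k:ℝ) + 1 := by positivity
    have hw : 0 ≤ p ^ 2 * x ^ k * (((k:ℝ) + 1) / 2) := by
      have : (0:ℝ) ≤ x ^ k := pow_nonneg hx0 k
      positivity
    have h1 := mul_le_mul_of_nonneg_left (key k) hw
    calc p ^ 2 * (1 - p) ^ k * (((k:ℝ) + 1) / 2 * Real.log (1 + B / ((k:ℝ) + 1)))
        = p ^ 2 * x ^ k * (((k:ℝ) + 1) / 2) * Real.log (1 + B / ((k:ℝ) + 1)) := by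
          rw [← hxdef]; ring
      _ ≤ p ^ 2 * x ^ k * (((k:ℝ) + 1) / 2) * (L + C * (1 / ((k:ℝ) + 1) - p)) := h1
      _ = p ^ 2 * x ^ k * ((k:ℝ) + 1) * (L / 2) + p ^ 2 * x ^ k * (C / 2)
            - p ^ 2 * x ^ k * ((k:ℝ) + 1) * (C * p / 2) := by
          field_simp
          ring
  have hsum : Summable (fun k : ℕ =>
      p ^ 2 * (1 - p) ^ k * (((k:ℝ) + 1) / 2 * Real.log (1 + B / ((k:ℝ) + 1)))) :=
    Summable.of_nonneg_of_le hnn hble hb.summable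
  refine ⟨hsum, ?_⟩
  calc (∑' k : ℕ, p ^ 2 * (1 - p) ^ k * (((k:ℝ) + 1) / 2 * Real.log (1 + B / ((k:ℝ) + 1))))
      ≤ ∑' k : ℕ, (p ^ 2 * x ^ k * ((k:ℝ) + 1) * (L / 2) + p ^ 2 * x ^ k * (C / 2)
        - p ^ 2 * x ^ k * ((k:ℝ) + 1) * (C * p / 2)) :=
        Summable.tsum_le_tsum hble hsum hb.summable
    _ = 1 / 2 * L := hb.tsum_eq
end
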